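/- Let p be a prime number, let R be a commutative ring of characteristic p, and let g ∈ R⟦X⟧. For every natural number m, the coefficient of X^m in the (p−1)-fold iterated formal derivative of g equals −(the coefficient of X^{m+p−1} in g) if p divides m, and equals 0 otherwise. -/

import Mathlib

open Finset

lemma coeff_iter_deriv {R : Type*} [CommRing R] (g : PowerSeries R) (k m : ℕ) :
    PowerSeries.coeff (R := R) m (PowerSeries.derivativeFun^[k] g)
      = ((∏ i ∈ range k, (m + i + 1) : ℕ) : R) * PowerSeries.coeff (R := R) (m + k) g := by
  induction k generalizing m with
  | zero => simp
  | succ k ih =>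
    have hd : ∀ f : PowerSeries R, f.derivativeFun = PowerSeries.derivative R f := fun _ => rfl
    rw [Function.iterate_succ_apply', hd, PowerSeries.coeff_derivativeFun, ih,
      prod_range_succ']
    have e1 : (∏ i ∈ range k, (m + 1 + i + 1)) = ∏ i ∈ range k, (m + (i + 1) + 1) :=
      prod_congr rfl fun i _ => by omega
    have e2 : m + 1 + k = m + (k + 1) := by omega
    rw [e1, e2]
    push_cast
    ring

lemma prod_mod (p m : ℕ) (hp : p.Prime) :
    ((∏ i ∈ range (p - 1), (m + i + 1) : ℕ) : ZMod p)
      = if p ∣ m then -1 else 0 := by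
  haveI : Fact p.Prime := ⟨hp⟩
  push_cast
  split_ifs with h
  · have hm : (m : ZMod p) = 0 := (ZMod.natCast_eq_zero_iff m p).mpr h
    calc (∏ i ∈ range (p - 1), ((m : ZMod p) + i + 1))
        = ∏ i ∈ range (p - 1), ((i : ZMod p) + 1) := by
          apply prod_congr rfl; intro i _; rw [hm, zero_add]
      _ = ((∏ i ∈ range (p - 1), (i + 1) : ℕ) : ZMod p) := by push_cast; rfl
      _ = -1 := by rw [prod_range_add_one_eq_factorial, ZMod.wilsons_lemma]
  · have hr : 0 < m % p := Nat.pos_of_ne_zero (fun h0 => h (Nat.dvd_of_mod_eq_zero h0))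
    have hrp : m % p < p := Nat.mod_lt _ hp.pos
    have hdm := Nat.div_add_mod m p
    apply prod_eq_zero (show p - m % p - 1 ∈ range (p - 1) by simp; omega)
    have h1 : ((m : ZMod p) + (p - m % p - 1 : ℕ) + 1)
        = ((m + (p - m % p - 1) + 1 : ℕ) : ZMod p) := by push_cast; ring
    rw [h1, ZMod.natCast_eq_zero_iff]
    have h2 : m + (p - m % p - 1) + 1 = p * (m / p) + p := by omega
    rw [h2]
    exact Dvd.dvd.add (Dvd.intro _ rfl) dvd_rfl

theorem stmt_10 (p : ℕ) (hp : p.Prime) (R : Type*) [CommRing R] [CharP R p]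
    (g : PowerSeries R) (m : ℕ) :
    PowerSeries.coeff (R := R) m (PowerSeries.derivativeFun^[p - 1] g)
      = if p ∣ m then -(PowerSeries.coeff (R := R) (m + p - 1) g) else 0 := by
  rw [coeff_iter_deriv]
  have hcast : ((∏ i ∈ range (p - 1), (m + i + 1) : ℕ) : R)
      = (ZMod.castHom dvd_rfl R) ((∏ i ∈ range (p - 1), (m + i + 1) : ℕ) : ZMod p) := by
    rw [map_natCast]
  rw [hcast, prod_mod p m hp]
  have h3 : m + (p - 1) = m + p - 1 := by have := hp.pos; omega
  rw [h3]
  split_ifs with h <;> simp [map_neg]
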